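/- Let p and d be natural numbers, let 𝔾_p be the class of graphs of degree at most p, and let X ⊂ ℝ^d be bounded. For every GFMT T of type d → r expressible in MPLang (i.e., defined componentwise by a tuple of r MPLang expressions appropriate for input arity d) there exists an MPNN N of type d → r such that N(G)(χ)(v) = T(G)(χ)(v) for every graph G ∈ 𝔾_p, every d-dimensional feature map χ on G whose image is contained in X, and every node v of G. -/

import Mathlib

open scoped BigOperators

/-- A finite graph: nodes `Fin n`, with a symmetric, irreflexive adjacency relation. -/
structure FGraph where
  n : ℕ
  adj : Fin n → Fin n → Bool
  symm : ∀ u v, adj u v = adj v u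
  irrefl : ∀ v, adj v v = false

namespace FGraph

/-- The set of neighbors of `v` in `G`. -/
def neighbors (G : FGraph) (v : Fin G.n) : Finset (Fin G.n) :=
  Finset.univ.filter fun u => G.adj v u

/-- The degree of a node. -/
def degree (G : FGraph) (v : Fin G.n) : ℕ := (G.neighbors v).card

/-- `G` has degree at most `p` (i.e., `G ∈ 𝔾_p`). -/
def DegreeLE (G : FGraph) (p : ℕ) : Prop := ∀ v, G.degree v ≤ p

end FGraph

/-- The rectified linear unit. -/
noncomputable def ReLU (x : ℝ) : ℝ := max 0 x

/-- An MPNN layer of type `d → r`: matrices `W₁, W₂ ∈ ℝ^{r×d}`, bias `b ∈ ℝ^r`,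
and a continuous activation function `σ`. -/
structure Layer (d r : ℕ) where
  W₁ : Matrix (Fin r) (Fin d) ℝ
  W₂ : Matrix (Fin r) (Fin d) ℝ
  b : Fin r → ℝ
  σ : ℝ → ℝ
  hσ : Continuous σ

namespace Layer

/-- The GFMT defined by a layer:
`L(G)(χ)(v) = σ(W₁ χ(v) + W₂ Σ_{u ∈ N_G(v)} χ(u) + b)`, componentwise. -/
noncomputable def eval {d r : ℕ} (L : Layer d r) (G : FGraph)
    (χ : Fin G.n → Fin d → ℝ) (v : Fin G.n) : Fin r → ℝ :=
  fun i => L.σ (L.W₁.mulVec (χ v) i + L.W₂.mulVec (∑ u ∈ G.neighbors v, χ u) i + L.b i)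

end Layer

/-- An MPNN: a nonempty sequence of layers with matching arities. -/
inductive MPNN : ℕ → ℕ → Type where
  | single {d r : ℕ} : Layer d r → MPNN d r
  | cons {d m r : ℕ} : Layer d m → MPNN m r → MPNN d r

namespace MPNN

/-- The GFMT defined by an MPNN: the sequential composition of its layers. -/
noncomputable def eval : {d r : ℕ} → MPNN d r → (G : FGraph) →
    (Fin G.n → Fin d → ℝ) → (Fin G.n → Fin r → ℝ)
  | _, _, .single L, G, χ => L.eval G χ
  | _, _, .cons L N, G, χ => N.eval G (L.eval G χ)

/-- A ReLU-MPNN: every layer uses ReLU, except that the last layer may use the identity. -/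
def IsReLU : {d r : ℕ} → MPNN d r → Prop
  | _, _, .single L => L.σ = ReLU ∨ L.σ = id
  | _, _, .cons L N => L.σ = ReLU ∧ N.IsReLU

/-- The set of activation functions used in the layers of an MPNN. -/
def activations : {d r : ℕ} → MPNN d r → Set (ℝ → ℝ)
  | _, _, .single L => {L.σ}
  | _, _, .cons L N => insert L.σ N.activations

/-- The number of layers of an MPNN. -/
def numLayers : {d r : ℕ} → MPNN d r → ℕ
  | _, _, .single _ => 1
  | _, _, .cons _ N => N.numLayers + 1

end MPNN

/-- MPLang expressions: `e ::= 1 | P_i | a·e | e + e | f(e) | ◇e`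
with `f : ℝ → ℝ` continuous. -/
inductive MPLang : Type where
  | one : MPLang
  | proj : ℕ → MPLang
  | scale : ℝ → MPLang → MPLang
  | add : MPLang → MPLang → MPLang
  | app : (f : ℝ → ℝ) → Continuous f → MPLang → MPLang
  | diamond : MPLang → MPLang

namespace MPLang

/-- `e` is appropriate for input arity `d`: every `P_i` has `1 ≤ i ≤ d`. -/
def Appropriate (d : ℕ) : MPLang → Prop
  | .one => True
  | .proj i => 1 ≤ i ∧ i ≤ d
  | .scale _ e => e.Appropriate d
  | .add e₁ e₂ => e₁.Appropriate d ∧ e₂.Appropriate d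
  | .app _ _ e => e.Appropriate d
  | .diamond e => e.Appropriate d

/-- Semantics of MPLang expressions (the `P_i` are 1-based; out-of-range
projections, which cannot occur in expressions appropriate for `d`, yield 0). -/
noncomputable def eval (d : ℕ) : MPLang → (G : FGraph) →
    (Fin G.n → Fin d → ℝ) → Fin G.n → ℝ
  | .one, _, _, _ => 1
  | .proj i, _, χ, v => if h : i - 1 < d then χ v ⟨i - 1, h⟩ else 0
  | .scale a e, G, χ, v => a * e.eval d G χ v
  | .add e₁ e₂, G, χ, v => e₁.eval d G χ v + e₂.eval d G χ v
  | .app f _ e, G, χ, v => f (e.eval d G χ v)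
  | .diamond e, G, χ, v => ∑ u ∈ G.neighbors v, e.eval d G χ u

/-- All function applications in the expression apply functions from `F`. -/
def AppsIn (F : Set (ℝ → ℝ)) : MPLang → Prop
  | .one => True
  | .proj _ => True
  | .scale _ e => e.AppsIn F
  | .add e₁ e₂ => e₁.AppsIn F ∧ e₂.AppsIn F
  | .app f _ e => f ∈ F ∧ e.AppsIn F
  | .diamond e => e.AppsIn F

/-- A ReLU-MPLang expression: all function applications apply ReLU. -/
def IsReLU (e : MPLang) : Prop := e.AppsIn {ReLU}

end MPLang

section Aux

open Finset

namespace MPNN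

/-- Concatenation of two MPNNs. -/
def comp : {d m r : ℕ} → MPNN d m → MPNN m r → MPNN d r
  | _, _, _, .single L, M => .cons L M
  | _, _, _, .cons L N, M => .cons L (N.comp M)

lemma eval_comp : ∀ {d m r : ℕ} (N : MPNN d m) (M : MPNN m r) (G : FGraph)
    (χ : Fin G.n → Fin d → ℝ), (N.comp M).eval G χ = M.eval G (N.eval G χ)
  | _, _, _, .single _, _, _, _ => rfl
  | _, _, _, .cons L N, M, G, χ => by
      show (N.comp M).eval G (L.eval G χ) = _
      rw [eval_comp N M G (L.eval G χ)]
      rfl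

end MPNN

/-- A layer with identity activation. -/
noncomputable def Layer.lin {D r : ℕ} (A B : Matrix (Fin r) (Fin D) ℝ) (c : Fin r → ℝ) :
    Layer D r := ⟨A, B, c, id, continuous_id⟩

lemma Layer.lin_eval {D r : ℕ} (A B : Matrix (Fin r) (Fin D) ℝ) (c : Fin r → ℝ)
    (G : FGraph) (χ : Fin G.n → Fin D → ℝ) (v : Fin G.n) (i : Fin r) :
    (Layer.lin A B c).eval G χ v i
      = A.mulVec (χ v) i + B.mulVec (∑ u ∈ G.neighbors v, χ u) i + c i := rfl

lemma sum_if_single {n : ℕ} (j0 : Fin n) (a : ℝ) (x : Fin n → ℝ) :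
    ∑ j, (if j = j0 then a else 0) * x j = a * x j0 := by
  rw [Finset.sum_eq_single j0]
  · simp
  · intro j _ hj; simp [hj]
  · simp

/-- Matrix whose first `D` rows are the identity pattern and last row is `w`. -/
def keepM (D m : ℕ) (w : Fin m → ℝ) : Matrix (Fin (D+1)) (Fin m) ℝ :=
  Matrix.of fun i j => if (i : ℕ) < D then (if (i : ℕ) = (j : ℕ) then 1 else 0) else w j

lemma keepM_mulVec {D m : ℕ} (hDm : D ≤ m) (w : Fin m → ℝ) (x : Fin m → ℝ) (i : Fin (D+1)) :
    (keepM D m w).mulVec x i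
      = if h : (i : ℕ) < D then x ⟨i, h.trans_le hDm⟩ else ∑ j, w j * x j := by
  by_cases h : (i : ℕ) < D
  · rw [dif_pos h]
    show ∑ j, (keepM D m w) i j * x j = _
    rw [Finset.sum_eq_single (⟨(i : ℕ), h.trans_le hDm⟩ : Fin m)]
    · simp [keepM, h]
    · intro j _ hj
      have : (i : ℕ) ≠ (j : ℕ) := by
        intro hh; exact hj (Fin.ext hh.symm)
      simp [keepM, h, this]
    · simp
  · rw [dif_neg h]
    show ∑ j, (keepM D m w) i j * x j = _
    apply Finset.sum_congr rfl
    intro j _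
    simp [keepM, h]

/-- Matrix whose first `D` rows are zero and last row is `w`. -/
def botM (D m : ℕ) (w : Fin m → ℝ) : Matrix (Fin (D+1)) (Fin m) ℝ :=
  Matrix.of fun i j => if (i : ℕ) < D then 0 else w j

lemma botM_mulVec {D m : ℕ} (w : Fin m → ℝ) (x : Fin m → ℝ) (i : Fin (D+1)) :
    (botM D m w).mulVec x i
      = if (i : ℕ) < D then 0 else ∑ j, w j * x j := by
  by_cases h : (i : ℕ) < D
  · rw [if_pos h]
    show ∑ j, (botM D m w) i j * x j = _
    apply Finset.sum_eq_zero
    intro j _; simp [botM, h]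
  · rw [if_neg h]
    show ∑ j, (botM D m w) i j * x j = _
    apply Finset.sum_congr rfl
    intro j _; simp [botM, h]

end Aux
section Glue

/-- Interpolation weight used to glue the identity and a shifted copy of `f`. -/
noncomputable def glueW (B C : ℝ) (x : ℝ) : ℝ := min 1 (max 0 ((C - B - x) / (C - 2*B)))

/-- A continuous function equal to the identity on `(-∞, B]` and to `x ↦ f (x - C)`
on `[C - B, ∞)`. -/
noncomputable def glue (f : ℝ → ℝ) (B C : ℝ) (x : ℝ) : ℝ :=
  x * glueW B C x + f (x - C) * (1 - glueW B C x)

lemma glue_continuous (f : ℝ → ℝ) (hf : Continuous f) (B C : ℝ) :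
    Continuous (glue f B C) := by
  unfold glue glueW
  fun_prop

lemma glueW_eq_one {B C x : ℝ} (hB : 0 ≤ B) (hC : C = 2*B + 2) (hx : x ≤ B) :
    glueW B C x = 1 := by
  unfold glueW
  have hden : (0:ℝ) < C - 2*B := by rw [hC]; ring_nf; norm_num
  have h1 : (1:ℝ) ≤ (C - B - x) / (C - 2*B) := by
    rw [le_div_iff₀ hden]; rw [hC]; linarith
  rw [max_eq_right (by linarith), min_eq_left h1]

lemma glueW_eq_zero {B C x : ℝ} (hB : 0 ≤ B) (hC : C = 2*B + 2) (hx : C - B ≤ x) :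
    glueW B C x = 0 := by
  unfold glueW
  have hden : (0:ℝ) < C - 2*B := by rw [hC]; ring_nf; norm_num
  have h1 : (C - B - x) / (C - 2*B) ≤ 0 :=
    div_nonpos_of_nonpos_of_nonneg (by linarith) hden.le
  rw [max_eq_left h1, min_eq_right (by norm_num)]

lemma glue_eq_id {f : ℝ → ℝ} {B C x : ℝ} (hB : 0 ≤ B) (hC : C = 2*B + 2) (hx : x ≤ B) :
    glue f B C x = x := by
  unfold glue; rw [glueW_eq_one hB hC hx]; ring

lemma glue_eq_f {f : ℝ → ℝ} {B C x : ℝ} (hB : 0 ≤ B) (hC : C = 2*B + 2) (hx : C - B ≤ x) :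
    glue f B C x = f (x - C) := by
  unfold glue; rw [glueW_eq_zero hB hC hx]; ring

end Glue

section MPLangLemmas

lemma MPLang.appropriate_mono : ∀ (e : MPLang) {d D : ℕ}, d ≤ D →
    e.Appropriate d → e.Appropriate D
  | .one, _, _, _, _ => trivial
  | .proj _, _, _, h, hi => ⟨hi.1, hi.2.trans h⟩
  | .scale _ e, _, _, h, he => e.appropriate_mono h he
  | .add e₁ e₂, _, _, h, he => ⟨e₁.appropriate_mono h he.1, e₂.appropriate_mono h he.2⟩
  | .app _ _ e, _, _, h, he => e.appropriate_mono h he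
  | .diamond e, _, _, h, he => e.appropriate_mono h he

/-- The value of an expression appropriate for `d` only depends on the first `d`
components of the feature map. -/
lemma MPLang.eval_congr : ∀ (e : MPLang) {d D₁ D₂ : ℕ}, e.Appropriate d → ∀ (h1 : d ≤ D₁) (h2 : d ≤ D₂),
    ∀ (G : FGraph) (χ₁ : Fin G.n → Fin D₁ → ℝ) (χ₂ : Fin G.n → Fin D₂ → ℝ),
    (∀ v (i : ℕ) (hd : i < d), χ₁ v ⟨i, hd.trans_le h1⟩ = χ₂ v ⟨i, hd.trans_le h2⟩) →
    ∀ v, e.eval D₁ G χ₁ v = e.eval D₂ G χ₂ v := by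
  intro e
  induction e with
  | one => intro d D₁ D₂ he h1 h2 G χ₁ χ₂ hχ v; rfl
  | proj i =>
      intro d D₁ D₂ he h1 h2 G χ₁ χ₂ hχ v
      obtain ⟨hi1, hi2⟩ := he
      have hd : i - 1 < d := by omega
      simp only [MPLang.eval]
      rw [dif_pos (hd.trans_le h1), dif_pos (hd.trans_le h2)]
      exact hχ v (i-1) hd
  | scale a e ih =>
      intro d D₁ D₂ he h1 h2 G χ₁ χ₂ hχ v
      simp only [MPLang.eval]
      rw [ih he h1 h2 G χ₁ χ₂ hχ v]
  | add e₁ e₂ ih₁ ih₂ =>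
      intro d D₁ D₂ he h1 h2 G χ₁ χ₂ hχ v
      simp only [MPLang.eval]
      rw [ih₁ he.1 h1 h2 G χ₁ χ₂ hχ v, ih₂ he.2 h1 h2 G χ₁ χ₂ hχ v]
  | app f hf e ih =>
      intro d D₁ D₂ he h1 h2 G χ₁ χ₂ hχ v
      simp only [MPLang.eval]
      rw [ih he h1 h2 G χ₁ χ₂ hχ v]
  | diamond e ih =>
      intro d D₁ D₂ he h1 h2 G χ₁ χ₂ hχ v
      simp only [MPLang.eval]
      exact Finset.sum_congr rfl fun u _ => ih he h1 h2 G χ₁ χ₂ hχ u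

end MPLangLemmas
section Key

/-- Key lemma: every MPLang expression appropriate for `D` can be computed by an
MPNN of type `D → D+1` which preserves all `D` input channels and appends the
value of the expression, with a uniform output bound, over graphs of degree at
most `p` and inputs bounded by `B`. -/
lemma key_mpnn (p : ℕ) (e : MPLang) : ∀ (D : ℕ), e.Appropriate D → ∀ B : ℝ, 0 ≤ B →
    ∃ (N : MPNN D (D+1)) (B' : ℝ), 0 ≤ B' ∧
      ∀ (G : FGraph), G.DegreeLE p → ∀ χ : Fin G.n → Fin D → ℝ,
        (∀ v i, |χ v i| ≤ B) →
        ∀ v, (∀ i : Fin D, N.eval G χ v i.castSucc = χ v i) ∧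
          N.eval G χ v (Fin.last D) = e.eval D G χ v ∧
          (∀ i, |N.eval G χ v i| ≤ B') := by
  induction e with
  | one =>
      intro D he B hB
      refine ⟨.single (Layer.lin (keepM D D 0) 0 (fun i => if (i:ℕ) < D then 0 else 1)),
        max B 1, le_trans zero_le_one (le_max_right B 1), ?_⟩
      intro G hdeg χ hχ v
      have hev : ∀ i : Fin (D+1),
          MPNN.eval (.single (Layer.lin (keepM D D 0) 0
              (fun i => if (i:ℕ) < D then 0 else 1))) G χ v i
            = (if h : (i:ℕ) < D then χ v ⟨i, h⟩ else 0) + (if (i:ℕ) < D then 0 else 1) := by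
        intro i
        show (Layer.lin _ _ _).eval G χ v i = _
        rw [Layer.lin_eval, keepM_mulVec le_rfl, Matrix.zero_mulVec]
        simp
      refine ⟨?_, ?_, ?_⟩
      · intro i
        rw [hev]
        simp [i.isLt]
      · rw [hev]
        simp [MPLang.eval]
      · intro i
        rw [hev]
        by_cases h : (i:ℕ) < D
        · simp only [dif_pos h, if_pos h, add_zero]
          exact le_trans (hχ v _) (le_max_left B 1)
        · simp only [dif_neg h, if_neg h, zero_add]
          rw [abs_one]
          exact le_max_right B 1
  | proj k =>
      intro D he B hB
      obtain ⟨hk1, hk2⟩ := he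
      have hkD : k - 1 < D := by omega
      set j0 : Fin D := ⟨k - 1, hkD⟩ with hj0
      refine ⟨.single (Layer.lin (keepM D D (fun j => if j = j0 then 1 else 0)) 0 0),
        B, hB, ?_⟩
      intro G hdeg χ hχ v
      have hev : ∀ i : Fin (D+1),
          MPNN.eval (.single (Layer.lin (keepM D D (fun j => if j = j0 then 1 else 0)) 0 0))
              G χ v i
            = (if h : (i:ℕ) < D then χ v ⟨i, h⟩ else χ v j0) := by
        intro i
        show (Layer.lin _ _ _).eval G χ v i = _
        rw [Layer.lin_eval, keepM_mulVec le_rfl, Matrix.zero_mulVec]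
        simp [sum_if_single]
      refine ⟨?_, ?_, ?_⟩
      · intro i
        rw [hev]
        simp [i.isLt]
      · rw [hev]
        rw [dif_neg (by simp : ¬ ((Fin.last D : Fin (D+1)) : ℕ) < D)]
        simp only [MPLang.eval]
        rw [dif_pos hkD]
      · intro i
        rw [hev]
        by_cases h : (i:ℕ) < D
        · rw [dif_pos h]; exact hχ v _
        · rw [dif_neg h]; exact hχ v _
  | scale a e ih =>
      intro D he B hB
      obtain ⟨N, B', hB', hN⟩ := ih D he B hB
      refine ⟨N.comp (.single (Layer.lin
          (keepM D (D+1) (fun j => if j = Fin.last D then a else 0)) 0 0)),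
        max B' (|a| * B'), le_trans hB' (le_max_left _ _), ?_⟩
      intro G hdeg χ hχ v
      obtain ⟨hpres, hlast, hbd⟩ := hN G hdeg χ hχ v
      set ψ := N.eval G χ with hψ
      have hev : ∀ i : Fin (D+1),
          (N.comp (.single (Layer.lin
              (keepM D (D+1) (fun j => if j = Fin.last D then a else 0)) 0 0))).eval G χ v i
            = (if h : (i:ℕ) < D then ψ v ⟨i, by omega⟩ else a * ψ v (Fin.last D)) := by
        intro i
        rw [MPNN.eval_comp]
        show (Layer.lin _ _ _).eval G ψ v i = _
        rw [Layer.lin_eval, keepM_mulVec (by omega), Matrix.zero_mulVec]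
        simp [sum_if_single]
      refine ⟨?_, ?_, ?_⟩
      · intro i
        rw [hev]
        rw [dif_pos (by simpa using i.isLt : ((i.castSucc : Fin (D+1)) : ℕ) < D)]
        exact hpres i
      · rw [hev]
        rw [dif_neg (by simp : ¬ ((Fin.last D : Fin (D+1)) : ℕ) < D)]
        simp only [MPLang.eval]
        rw [hlast]
      · intro i
        rw [hev]
        by_cases h : (i:ℕ) < D
        · rw [dif_pos h]
          exact le_trans (hbd _) (le_max_left _ _)
        · rw [dif_neg h, abs_mul]
          exact le_trans (mul_le_mul_of_nonneg_left (hbd _) (abs_nonneg a))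
            (le_max_right _ _)
  | add e₁ e₂ ih₁ ih₂ =>
      intro D he B hB
      obtain ⟨N₁, B₁, hB₁, h₁⟩ := ih₁ D he.1 B hB
      obtain ⟨N₂, B₂, hB₂, h₂⟩ := ih₂ (D+1) (e₂.appropriate_mono (Nat.le_succ D) he.2) B₁ hB₁
      set jA : Fin (D+2) := (Fin.last D).castSucc with hjA
      set jB : Fin (D+2) := Fin.last (D+1) with hjB
      refine ⟨N₁.comp (N₂.comp (.single (Layer.lin
          (keepM D (D+2) (fun j => (if j = jA then 1 else 0) + (if j = jB then 1 else 0)))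
          0 0))), max B₂ (B₂ + B₂), le_trans hB₂ (le_max_left _ _), ?_⟩
      intro G hdeg χ hχ v
      have hψ₁bd : ∀ u i, |(N₁.eval G χ) u i| ≤ B₁ := fun u i => (h₁ G hdeg χ hχ u).2.2 i
      obtain ⟨hpres₂, hlast₂, hbd₂⟩ := h₂ G hdeg (N₁.eval G χ) hψ₁bd v
      set ψ₁ := N₁.eval G χ with hψ₁
      set ψ₂ := N₂.eval G ψ₁ with hψ₂
      have hev : ∀ i : Fin (D+1),
          (N₁.comp (N₂.comp (.single (Layer.lin
              (keepM D (D+2) (fun j => (if j = jA then 1 else 0) + (if j = jB then 1 else 0)))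
              0 0)))).eval G χ v i
            = (if h : (i:ℕ) < D then ψ₂ v ⟨i, by omega⟩ else ψ₂ v jA + ψ₂ v jB) := by
        intro i
        rw [MPNN.eval_comp, MPNN.eval_comp]
        show (Layer.lin _ _ _).eval G ψ₂ v i = _
        rw [Layer.lin_eval, keepM_mulVec (by omega), Matrix.zero_mulVec]
        simp [add_mul, Finset.sum_add_distrib, sum_if_single]
      have hagree : ∀ u (i : ℕ) (hd : i < D),
          ψ₁ u ⟨i, hd.trans_le (Nat.le_succ D)⟩ = χ u ⟨i, hd.trans_le le_rfl⟩ := by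
        intro u i hd
        exact (h₁ G hdeg χ hχ u).1 ⟨i, hd⟩
      refine ⟨?_, ?_, ?_⟩
      · intro i
        rw [hev]
        rw [dif_pos (by simpa using i.isLt : ((i.castSucc : Fin (D+1)) : ℕ) < D)]
        have : ψ₂ v ((i.castSucc).castSucc) = ψ₁ v i.castSucc := hpres₂ i.castSucc
        rw [show (⟨((i.castSucc : Fin (D+1)) : ℕ), by omega⟩ : Fin (D+2))
            = (i.castSucc).castSucc from rfl, this]
        exact (h₁ G hdeg χ hχ v).1 i
      · rw [hev]
        rw [dif_neg (by simp : ¬ ((Fin.last D : Fin (D+1)) : ℕ) < D)]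
        have hA : ψ₂ v jA = e₁.eval D G χ v := by
          rw [hjA, hpres₂ (Fin.last D)]
          exact (h₁ G hdeg χ hχ v).2.1
        have hBv : ψ₂ v jB = e₂.eval D G χ v := by
          rw [hjB, hlast₂]
          exact MPLang.eval_congr e₂ he.2 (Nat.le_succ D) le_rfl G ψ₁ χ hagree v
        rw [hA, hBv]
        simp [MPLang.eval]
      · intro i
        rw [hev]
        by_cases h : (i:ℕ) < D
        · rw [dif_pos h]
          exact le_trans (hbd₂ _) (le_max_left _ _)
        · rw [dif_neg h]
          exact le_trans (le_trans (abs_add_le _ _) (add_le_add (hbd₂ _) (hbd₂ _)))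
            (le_max_right _ _)
  | app f hf e ih =>
      intro D he B hB
      obtain ⟨N, B', hB', hN⟩ := ih D he B hB
      obtain ⟨M, hM⟩ : ∃ M, ∀ y ∈ Set.Icc (-B') B', ‖f y‖ ≤ M :=
        isCompact_Icc.exists_bound_of_continuousOn hf.continuousOn
      set C : ℝ := 2*B' + 2 with hC
      set L : Layer (D+1) (D+1) :=
        ⟨keepM D (D+1) (fun j => if j = Fin.last D then 1 else 0), 0,
          fun i => if (i:ℕ) < D then 0 else C, glue f B' C, glue_continuous f hf B' C⟩ with hL
      refine ⟨N.comp (.single L), max B' M, le_trans hB' (le_max_left _ _), ?_⟩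
      intro G hdeg χ hχ v
      obtain ⟨hpres, hlast, hbd⟩ := hN G hdeg χ hχ v
      set ψ := N.eval G χ with hψ
      have hev : ∀ i : Fin (D+1),
          (N.comp (.single L)).eval G χ v i
            = glue f B' C ((if h : (i:ℕ) < D then ψ v ⟨i, by omega⟩ else ψ v (Fin.last D))
                + (if (i:ℕ) < D then 0 else C)) := by
        intro i
        rw [MPNN.eval_comp]
        show glue f B' C ((keepM D (D+1) _).mulVec (ψ v) i
            + (0 : Matrix (Fin (D+1)) (Fin (D+1)) ℝ).mulVec (∑ u ∈ G.neighbors v, ψ u) i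
            + (if (i:ℕ) < D then 0 else C)) = _
        rw [keepM_mulVec (by omega), Matrix.zero_mulVec]
        simp only [Pi.zero_apply, add_zero, zero_add, sum_if_single, one_mul]
      refine ⟨?_, ?_, ?_⟩
      · intro i
        rw [hev]
        rw [dif_pos (by simpa using i.isLt : ((i.castSucc : Fin (D+1)) : ℕ) < D),
          if_pos (by simpa using i.isLt : ((i.castSucc : Fin (D+1)) : ℕ) < D), add_zero]
        have hx : ψ v i.castSucc ≤ B' := (abs_le.mp (hbd i.castSucc)).2
        rw [show (⟨((i.castSucc : Fin (D+1)) : ℕ), by omega⟩ : Fin (D+1)) = i.castSucc from rfl]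
        rw [glue_eq_id hB' hC hx]
        exact hpres i
      · rw [hev]
        rw [dif_neg (by simp : ¬ ((Fin.last D : Fin (D+1)) : ℕ) < D),
          if_neg (by simp : ¬ ((Fin.last D : Fin (D+1)) : ℕ) < D)]
        have hx : C - B' ≤ ψ v (Fin.last D) + C := by
          have := (abs_le.mp (hbd (Fin.last D))).1
          linarith
        rw [glue_eq_f hB' hC hx]
        simp only [MPLang.eval]
        rw [show ψ v (Fin.last D) + C - C = ψ v (Fin.last D) by ring, hlast]
      · intro i
        rw [hev]
        by_cases h : (i:ℕ) < D
        · rw [dif_pos h, if_pos h, add_zero,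
            glue_eq_id hB' hC ((abs_le.mp (hbd _)).2)]
          exact le_trans (hbd _) (le_max_left _ _)
        · rw [dif_neg h, if_neg h]
          have hx : C - B' ≤ ψ v (Fin.last D) + C := by
            have := (abs_le.mp (hbd (Fin.last D))).1
            linarith
          rw [glue_eq_f hB' hC hx,
            show ψ v (Fin.last D) + C - C = ψ v (Fin.last D) by ring]
          refine le_trans ?_ (le_max_right B' M)
          have hmem : ψ v (Fin.last D) ∈ Set.Icc (-B') B' := by
            constructor
            · exact (abs_le.mp (hbd _)).1
            · exact (abs_le.mp (hbd _)).2
          simpa using hM _ hmem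
  | diamond e ih =>
      intro D he B hB
      obtain ⟨N, B', hB', hN⟩ := ih D he B hB
      refine ⟨N.comp (.single (Layer.lin (keepM D (D+1) 0)
          (botM D (D+1) (fun j => if j = Fin.last D then 1 else 0)) 0)),
        max B' (p * B'), le_trans hB' (le_max_left _ _), ?_⟩
      intro G hdeg χ hχ v
      set ψ := N.eval G χ with hψ
      have hall : ∀ u, (∀ i : Fin D, ψ u i.castSucc = χ u i) ∧
          ψ u (Fin.last D) = e.eval D G χ u ∧ (∀ i, |ψ u i| ≤ B') :=
        fun u => hN G hdeg χ hχ u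
      have hev : ∀ i : Fin (D+1),
          (N.comp (.single (Layer.lin (keepM D (D+1) 0)
              (botM D (D+1) (fun j => if j = Fin.last D then 1 else 0)) 0))).eval G χ v i
            = (if h : (i:ℕ) < D then ψ v ⟨i, by omega⟩
                else ∑ u ∈ G.neighbors v, ψ u (Fin.last D)) := by
        intro i
        rw [MPNN.eval_comp]
        show (Layer.lin _ _ _).eval G ψ v i = _
        rw [Layer.lin_eval, keepM_mulVec (by omega), botM_mulVec]
        by_cases h : (i:ℕ) < D
        · rw [dif_pos h, dif_pos h, if_pos h]
          simp
        · rw [dif_neg h, dif_neg h, if_neg h]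
          rw [Finset.sum_congr rfl (fun j _ => rfl)]
          simp only [Pi.zero_apply, zero_mul, Finset.sum_const_zero, zero_add, add_zero]
          rw [Finset.sum_congr rfl
            (fun j _ => by rw [Finset.sum_apply])]
          rw [sum_if_single]
          simp
      refine ⟨?_, ?_, ?_⟩
      · intro i
        rw [hev]
        rw [dif_pos (by simpa using i.isLt : ((i.castSucc : Fin (D+1)) : ℕ) < D)]
        exact (hall v).1 i
      · rw [hev]
        rw [dif_neg (by simp : ¬ ((Fin.last D : Fin (D+1)) : ℕ) < D)]
        simp only [MPLang.eval]
        exact Finset.sum_congr rfl fun u _ => (hall u).2.1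
      · intro i
        rw [hev]
        by_cases h : (i:ℕ) < D
        · rw [dif_pos h]
          exact le_trans ((hall v).2.2 _) (le_max_left _ _)
        · rw [dif_neg h]
          refine le_trans ?_ (le_max_right _ _)
          calc |∑ u ∈ G.neighbors v, ψ u (Fin.last D)|
              ≤ ∑ u ∈ G.neighbors v, |ψ u (Fin.last D)| :=
                Finset.abs_sum_le_sum_abs _ _
            _ ≤ (G.neighbors v).card • B' :=
                Finset.sum_le_card_nsmul _ _ _ (fun u _ => (hall u).2.2 _)
            _ = ((G.neighbors v).card : ℝ) * B' := nsmul_eq_mul _ _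
            _ ≤ (p : ℝ) * B' := by
                apply mul_le_mul_of_nonneg_right _ hB'
                exact_mod_cast hdeg v
end Key
section Stack

/-- Stacking: a single MPNN computing all `k` expressions while preserving inputs. -/
lemma stack_mpnn (p D : ℕ) : ∀ (k : ℕ) (es : Fin k → MPLang), (∀ j, (es j).Appropriate D) →
    ∀ B : ℝ, 0 ≤ B →
    ∃ (N : MPNN D (D+k)) (B' : ℝ), 0 ≤ B' ∧
      ∀ G : FGraph, G.DegreeLE p → ∀ χ : Fin G.n → Fin D → ℝ, (∀ v i, |χ v i| ≤ B) →
        ∀ v, (∀ i : Fin D, N.eval G χ v ⟨i.val, by omega⟩ = χ v i) ∧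
          (∀ j : Fin k, N.eval G χ v ⟨D + j.val, by omega⟩ = (es j).eval D G χ v) ∧
          (∀ i, |N.eval G χ v i| ≤ B') := by
  intro k
  induction k with
  | zero =>
      intro es happ B hB
      refine ⟨.single (Layer.lin (1 : Matrix (Fin D) (Fin D) ℝ) 0 0), B, hB, ?_⟩
      intro G hdeg χ hχ v
      have hev : ∀ i : Fin D,
          (MPNN.single (Layer.lin (1 : Matrix (Fin D) (Fin D) ℝ) 0 0)).eval G χ v i
            = χ v i := by
        intro i
        show (Layer.lin _ _ _).eval G χ v i = _
        rw [Layer.lin_eval, Matrix.one_mulVec, Matrix.zero_mulVec]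
        simp
      exact ⟨fun i => hev i, fun j => j.elim0, fun i => (hev i) ▸ hχ v i⟩
  | succ k ih =>
      intro es happ B hB
      obtain ⟨N₁, B₁, hB₁, h₁⟩ := ih (fun j => es j.castSucc) (fun j => happ _) B hB
      obtain ⟨N₂, B₂, hB₂, h₂⟩ := key_mpnn p (es (Fin.last k)) (D+k)
        ((es (Fin.last k)).appropriate_mono (Nat.le_add_right D k) (happ _)) B₁ hB₁
      refine ⟨N₁.comp N₂, B₂, hB₂, ?_⟩
      intro G hdeg χ hχ v
      have hψbd : ∀ u i, |(N₁.eval G χ) u i| ≤ B₁ := fun u i => (h₁ G hdeg χ hχ u).2.2 i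
      obtain ⟨hpres₂, hlast₂, hbd₂⟩ := h₂ G hdeg (N₁.eval G χ) hψbd v
      have hout : ∀ i, (N₁.comp N₂).eval G χ v i = N₂.eval G (N₁.eval G χ) v i := by
        intro i; rw [MPNN.eval_comp]
      have hagree : ∀ u (i : ℕ) (hd : i < D),
          (N₁.eval G χ) u ⟨i, hd.trans_le (Nat.le_add_right D k)⟩
            = χ u ⟨i, hd.trans_le le_rfl⟩ := by
        intro u i hd
        exact (h₁ G hdeg χ hχ u).1 ⟨i, hd⟩
      refine ⟨?_, ?_, fun i => (hout i) ▸ hbd₂ i⟩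
      · intro i
        rw [hout]
        rw [show (⟨(i:ℕ), by omega⟩ : Fin (D+(k+1)))
            = (⟨(i:ℕ), by omega⟩ : Fin (D+k)).castSucc from rfl, hpres₂ _]
        exact (h₁ G hdeg χ hχ v).1 i
      · intro j
        rw [hout]
        induction j using Fin.lastCases with
        | last =>
            rw [show (⟨D + (Fin.last k : Fin (k+1)).val, by omega⟩ : Fin (D+(k+1)))
                = Fin.last (D+k) from rfl, hlast₂]
            exact MPLang.eval_congr (es (Fin.last k)) (happ _) (Nat.le_add_right D k) le_rfl
              G (N₁.eval G χ) χ hagree v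
        | cast j' =>
            rw [show (⟨D + (j'.castSucc : Fin (k+1)).val, by omega⟩ : Fin (D+(k+1)))
                = (⟨D + j'.val, by omega⟩ : Fin (D+k)).castSucc from rfl, hpres₂ _]
            exact (h₁ G hdeg χ hχ v).2.1 j'

end Stack
/-- Theorem 2 of the paper: over graphs of degree at most `p`
and feature maps with values in a bounded set `X`, every GFMT expressible in
MPLang is expressible by an MPNN. -/
theorem mplang_to_mpnn_bounded (p d r : ℕ) (X : Set (Fin d → ℝ))
    (hX : Bornology.IsBounded X)
    (es : Fin r → MPLang) (happ : ∀ j, (es j).Appropriate d) :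
    ∃ N : MPNN d r,
      ∀ (G : FGraph), G.DegreeLE p →
        ∀ χ : Fin G.n → Fin d → ℝ, (∀ v, χ v ∈ X) →
          ∀ (v : Fin G.n) (j : Fin r), N.eval G χ v j = (es j).eval d G χ v := by
  obtain ⟨B₀, hB₀⟩ := (isBounded_iff_forall_norm_le).mp hX
  set B : ℝ := max B₀ 0 with hBdef
  have hB : 0 ≤ B := le_max_right _ _
  obtain ⟨N₁, B', hB', h₁⟩ := stack_mpnn p d r es happ B hB
  -- final extraction layer
  set L : Layer (d+r) r := Layer.lin
    (Matrix.of fun (i : Fin r) (j : Fin (d+r)) =>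
      if j = (⟨d + i.val, by omega⟩ : Fin (d+r)) then 1 else 0) 0 0 with hL
  refine ⟨N₁.comp (.single L), ?_⟩
  intro G hdeg χ hχ v j
  have hχbd : ∀ u i, |χ u i| ≤ B := by
    intro u i
    have h1 : ‖χ u i‖ ≤ ‖χ u‖ := norm_le_pi_norm (χ u) i
    have h2 : ‖χ u‖ ≤ B₀ := hB₀ _ (hχ u)
    rw [Real.norm_eq_abs] at h1
    exact le_trans (le_trans h1 h2) (le_max_left _ _)
  obtain ⟨hpres, hexpr, hbd⟩ := h₁ G hdeg χ hχbd v
  rw [MPNN.eval_comp]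
  show (Layer.lin _ _ _).eval G (N₁.eval G χ) v j = _
  rw [Layer.lin_eval, Matrix.zero_mulVec]
  show (∑ j', (if j' = (⟨d + j.val, by omega⟩ : Fin (d+r)) then (1:ℝ) else 0)
      * (N₁.eval G χ) v j') + 0 + 0 = _
  rw [sum_if_single, one_mul, add_zero, add_zero]
  exact hexpr j
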